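/- Every weakly 2-typical real is Π⁰₁-immune: if Y belongs to every Σ⁰₁(∅') class of Lebesgue measure 1, then Y (viewed as a subset of ω) contains no infinite co-c.e. set. -/

import Mathlib

open Classical in
noncomputable def chi (A : Set ℕ) : ℕ →. ℕ := fun n => Part.some (if n ∈ A then 1 else 0)

/-- Functions partial recursive in an oracle `O`. -/
inductive RecursiveIn' (O : ℕ →. ℕ) : (ℕ →. ℕ) → Prop
  | zero : RecursiveIn' O (pure 0)
  | succ : RecursiveIn' O (fun n => Part.some (n + 1))
  | left : RecursiveIn' O (fun n => Part.some n.unpair.1)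
  | right : RecursiveIn' O (fun n => Part.some n.unpair.2)
  | oracle : RecursiveIn' O O
  | pair {f g} : RecursiveIn' O f → RecursiveIn' O g →
      RecursiveIn' O fun n => Nat.pair <$> f n <*> g n
  | comp {f g} : RecursiveIn' O f → RecursiveIn' O g →
      RecursiveIn' O fun n => g n >>= f
  | prec {f g} : RecursiveIn' O f → RecursiveIn' O g →
      RecursiveIn' O (Nat.unpaired fun a n =>
        n.rec (f a) fun y IH => do let i ← IH; g (Nat.pair a (Nat.pair y i)))
  | rfind {f} : RecursiveIn' O f →
      RecursiveIn' O fun a => Nat.rfind fun n => (fun m => m = 0) <$> f (Nat.pair a n)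

/-- `A` is Turing reducible to `B`. -/
def TuringRed (A B : Set ℕ) : Prop := RecursiveIn' (chi B) (chi A)

/-- A total function computable from the oracle `O`. -/
def ComputableIn' (O : ℕ →. ℕ) (f : ℕ → ℕ) : Prop := RecursiveIn' O fun n => Part.some (f n)

/-- `S` is computably enumerable in the oracle `O`. -/
def CeIn (O : ℕ →. ℕ) (S : Set ℕ) : Prop :=
  ∃ f : ℕ →. ℕ, RecursiveIn' O f ∧ ∀ n, n ∈ S ↔ (f n).Dom

/-- The `e`-th c.e. set. -/
def W (e : ℕ) : Set ℕ := {n | ((Denumerable.ofNat Nat.Partrec.Code e).eval n).Dom}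

/-- The halting problem `∅'`. -/
def K0 : Set ℕ := {n | ((Denumerable.ofNat Nat.Partrec.Code n.unpair.1).eval n.unpair.2).Dom}

/-- The basic clopen cylinder of a finite binary string in Cantor space. -/
def cyl (σ : List Bool) : Set (ℕ → Bool) :=
  {X | ∀ i : Fin σ.length, X i = σ.get i}

/-- `S` is a `Σ⁰₁(O)` class: the union of the cylinders of an `O`-c.e. set of strings. -/
def Sigma01ClassIn (O : ℕ →. ℕ) (S : Set (ℕ → Bool)) : Prop :=
  ∃ V : Set ℕ, CeIn O V ∧
    S = {X | ∃ σ : List Bool, Encodable.encode σ ∈ V ∧ X ∈ cyl σ}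

/- ### Auxiliary lemmas -/

theorem aux_partrec_recursiveIn {O f} (h : Nat.Partrec f) : RecursiveIn' O f := by
  induction h with
  | zero => exact .zero
  | succ => exact .succ
  | left => exact .left
  | right => exact .right
  | pair _ _ ih1 ih2 => exact .pair ih1 ih2
  | comp _ _ ih1 ih2 => exact .comp ih1 ih2
  | prec _ _ ih1 ih2 => exact .prec ih1 ih2
  | rfind _ ih => exact .rfind ih

/-- The marker function: maps (the code of) a string `σ` ending in `false` to the
pair `(e, |σ|-1)`, and everything else to `0`. -/
def auxg (e : ℕ) : ℕ → ℕ := fun a =>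
  (Encodable.decode (α := List Bool) a).casesOn 0 fun σ =>
    if σ.reverse.head? = some false then Nat.pair e (σ.length - 1) else 0

theorem auxg_primrec (e : ℕ) : Primrec (auxg e) := by
  apply Primrec.option_casesOn (Primrec.decode (α := List Bool)) (Primrec.const 0)
  apply Primrec.ite
  · exact Primrec.eq.comp (Primrec.list_head?.comp (Primrec.list_reverse.comp .snd))
      (.const (some false))
  · exact Primrec₂.natPair.comp (.const e)
      (Primrec.nat_sub.comp (Primrec.list_length.comp .snd) (.const 1))
  · exact Primrec.const 0

theorem aux_zero_mem_K0 : (0:ℕ) ∈ K0 := by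
  show ((Denumerable.ofNat Nat.Partrec.Code (Nat.unpair 0).1).eval (Nat.unpair 0).2).Dom
  rw [Nat.Partrec.Code.ofNatCode_eq]
  show ((Nat.Partrec.Code.ofNatCode 0).eval 0).Dom
  rw [show Nat.Partrec.Code.ofNatCode 0 = Nat.Partrec.Code.zero from by
    rw [Nat.Partrec.Code.ofNatCode]]
  exact trivial

theorem aux_pair_mem_K0 (e m : ℕ) : Nat.pair e m ∈ K0 ↔ m ∈ W e := by
  show ((Denumerable.ofNat Nat.Partrec.Code (Nat.unpair (Nat.pair e m)).1).eval
    (Nat.unpair (Nat.pair e m)).2).Dom ↔ _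
  rw [Nat.unpair_pair]
  exact Iff.rfl

theorem aux_ceIn (e : ℕ) : CeIn (chi K0) {a | auxg e a ∉ K0} := by
  classical
  refine ⟨fun a => Nat.rfind fun n =>
    (fun m => m = 0) <$> ((fun k => Part.some (auxg e k.unpair.1) >>= chi K0) (Nat.pair a n)),
    ?_, ?_⟩
  · have h1 : RecursiveIn' (chi K0) (fun k => Part.some (auxg e k.unpair.1) >>= chi K0) := by
      apply RecursiveIn'.comp RecursiveIn'.oracle
      apply aux_partrec_recursiveIn
      apply Nat.Partrec.of_primrec
      exact Primrec.nat_iff.1 ((auxg_primrec e).comp (Primrec.fst.comp Primrec.unpair))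
    exact RecursiveIn'.rfind h1
  · intro a
    have hb : ∀ x, Part.some x >>= chi K0 = chi K0 x := fun x => Part.bind_some x _
    simp only [Set.mem_setOf_eq, Nat.rfind_dom]
    constructor
    · intro h
      refine ⟨0, ?_, ?_⟩
      · simp [chi, Nat.unpair_pair, hb, Part.bind_some, if_neg h]
      · intro m _; simp [chi, hb]
    · rintro ⟨n, hn, -⟩ hmem
      simp [chi, Nat.unpair_pair, hb, if_pos hmem] at hn

theorem aux_count_le (N k : ℕ) (F' : Finset (Fin N)) (hc : F'.card = k) :
    (Finset.univ.filter (fun f : Fin N → Bool => ∀ i ∈ F', f i = true)).card ≤ 2 ^ (N - k) := by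
  have := Fintype.card_le_of_injective
    (fun f : {f : Fin N → Bool // ∀ i ∈ F', f i = true} =>
      (fun i : ↥(F'ᶜ : Finset (Fin N)) => f.1 i.1))
    (by
      rintro ⟨f, hf⟩ ⟨g, hg⟩ h
      ext i
      by_cases hi : i ∈ F'
      · show f i = g i; rw [hf i hi, hg i hi]
      · exact congrFun h ⟨i, Finset.mem_compl.2 hi⟩)
  rw [Fintype.card_subtype] at this
  calc (Finset.univ.filter (fun f : Fin N → Bool => ∀ i ∈ F', f i = true)).card
      ≤ Fintype.card (↥(F'ᶜ : Finset (Fin N)) → Bool) := this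
    _ = 2 ^ (N - k) := by simp [Fintype.card_fun, Finset.card_compl, hc]

theorem aux_measure_allTrue_le (μ : MeasureTheory.Measure (ℕ → Bool))
    (hμ : ∀ σ : List Bool, μ (cyl σ) = (1 / 2 : ENNReal) ^ σ.length)
    {A : Set ℕ} (hA : A.Infinite) (k : ℕ) :
    μ {X : ℕ → Bool | ∀ n ∈ A, X n = true} ≤ (1/2 : ENNReal)^k := by
  obtain ⟨F, hFsub, hFcard⟩ := hA.exists_subset_card_eq k
  set N := (F.sup id) + 1 with hN
  have hlt : ∀ m ∈ F, m < N := fun m hm =>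
    Nat.lt_succ_of_le (Finset.le_sup (f := id) hm)
  set F' : Finset (Fin N) := F.attachFin hlt with hF'
  have hF'card : F'.card = k := by rw [hF', Finset.card_attachFin, hFcard]
  set T : Finset (Fin N → Bool) :=
    Finset.univ.filter (fun f : Fin N → Bool => ∀ i ∈ F', f i = true) with hT
  have hsub : {X : ℕ → Bool | ∀ n ∈ A, X n = true} ⊆
      ⋃ f ∈ T, cyl (List.ofFn f) := by
    intro X hX
    have hmem : (fun i : Fin N => X i) ∈ (T : Set (Fin N → Bool)) := by
      rw [hT, Finset.coe_filter]; refine ⟨Finset.mem_univ _, fun i hi => ?_⟩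
      rcases i with ⟨m, hm⟩
      rw [hF', Finset.mem_attachFin] at hi
      exact hX m (hFsub hi)
    refine Set.mem_biUnion hmem ?_
    intro i
    exact (List.get_ofFn _ i).symm
  calc μ {X : ℕ → Bool | ∀ n ∈ A, X n = true}
      ≤ μ (⋃ f ∈ T, cyl (List.ofFn f)) := MeasureTheory.measure_mono hsub
    _ ≤ ∑ f ∈ T, μ (cyl (List.ofFn f)) := MeasureTheory.measure_biUnion_finset_le T _
    _ = ∑ f ∈ T, (1/2 : ENNReal)^N := by
        apply Finset.sum_congr rfl; intro f _; rw [hμ, List.length_ofFn]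
    _ = T.card * (1/2 : ENNReal)^N := by rw [Finset.sum_const, nsmul_eq_mul]
    _ ≤ (2:ENNReal)^(N-k) * (1/2 : ENNReal)^N := by
        apply mul_le_mul_left
        have := aux_count_le N k F' hF'card
        rw [← hT] at this
        calc (T.card : ENNReal) ≤ ((2^(N-k) : ℕ) : ENNReal) := by exact_mod_cast this
          _ = (2:ENNReal)^(N-k) := by push_cast; ring
    _ = (1/2 : ENNReal)^k := by
        have hk : k ≤ N := by
          calc k = F'.card := hF'card.symm
            _ ≤ Fintype.card (Fin N) := Finset.card_le_univ F' |>.trans (by simp)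
            _ = N := by simp
        have h2 : (2:ENNReal) * 2⁻¹ = 1 := ENNReal.mul_inv_cancel (by norm_num) (by norm_num)
        obtain ⟨j, hj⟩ : ∃ j, N = j + k := ⟨N - k, (Nat.sub_add_cancel hk).symm⟩
        rw [hj, Nat.add_sub_cancel, pow_add, ← mul_assoc, ← mul_pow, one_div, h2, one_pow,
          one_mul]

/-- Every weakly 2-typical real is `Π⁰₁`-immune: if `Y` belongs to every `Σ⁰₁(∅')` class
of (fair-coin Lebesgue) measure one, then `{n | Y n = true}` contains no infinite
co-c.e. set.  The uniform measure `μ` on Cantor space is specified by its values on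
cylinders. -/
theorem weakly_two_typical_pi01immune
    (μ : MeasureTheory.Measure (ℕ → Bool))
    (hμ : ∀ σ : List Bool, μ (cyl σ) = (1 / 2 : ENNReal) ^ σ.length)
    (Y : ℕ → Bool)
    (hY : ∀ S : Set (ℕ → Bool), Sigma01ClassIn (chi K0) S → μ S = 1 → Y ∈ S) :
    ∀ e : ℕ, ((W e)ᶜ).Infinite → ¬ (W e)ᶜ ⊆ {n | Y n = true} := by
  intro e hinf hsub
  set S : Set (ℕ → Bool) := {X | ∃ n, n ∉ W e ∧ X n = false} with hSdef
  -- S is a Σ⁰₁(∅') class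
  have hclass : Sigma01ClassIn (chi K0) S := by
    refine ⟨{a | auxg e a ∉ K0}, aux_ceIn e, ?_⟩
    ext X
    constructor
    · rintro ⟨n, hn, hf⟩
      refine ⟨List.ofFn (fun i : Fin (n+1) => X i), ?_, ?_⟩
      · have hlast : (List.ofFn (fun i : Fin (n+1) => X i)).reverse.head? = some false := by
          have hne : List.ofFn (fun i : Fin (n+1) => X i) ≠ [] := by
            simp [List.ofFn_succ]
          rw [List.head?_reverse, List.getLast?_eq_getLast hne, List.getLast_ofFn]
          show some (X ((Fin.last n : Fin (n+1)) : ℕ)) = some false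
          rw [Fin.val_last, hf]
        have hgoal : (if (List.ofFn (fun i : Fin (n+1) => X i)).reverse.head? = some false
            then Nat.pair e ((List.ofFn (fun i : Fin (n+1) => X i)).length - 1) else 0) ∉ K0 := by
          rw [hlast, if_pos rfl]
          simp only [List.length_ofFn, Nat.add_sub_cancel]
          rw [aux_pair_mem_K0]
          exact hn
        show auxg e _ ∉ K0
        unfold auxg
        rw [Encodable.encodek]
        exact hgoal
      · intro i
        exact (List.get_ofFn _ i).symm
    · rintro ⟨σ, hV, hcyl⟩
      have hV0 : auxg e (Encodable.encode σ) ∉ K0 := hV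
      unfold auxg at hV0
      rw [Encodable.encodek] at hV0
      have hV' : (if σ.reverse.head? = some false then Nat.pair e (σ.length - 1) else 0)
          ∉ K0 := hV0
      by_cases hc : σ.reverse.head? = some false
      · rw [hc, if_pos rfl, aux_pair_mem_K0] at hV'
        have hσne : σ ≠ [] := by
          intro h; rw [h] at hc; simp at hc
        have hlen : σ.length - 1 < σ.length :=
          Nat.sub_lt (List.length_pos_iff.2 hσne) one_pos
        refine ⟨σ.length - 1, hV', ?_⟩
        have : σ.get ⟨σ.length - 1, hlen⟩ = false := by
          rw [List.head?_reverse, List.getLast?_eq_getElem?] at hc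
          have := List.getElem?_eq_getElem hlen
          rw [this] at hc
          simpa using hc
        rw [hcyl ⟨σ.length - 1, hlen⟩, this]
      · rw [if_neg hc] at hV'
        exact absurd aux_zero_mem_K0 hV'
  -- S has measure one
  have hcompl : Sᶜ = {X : ℕ → Bool | ∀ n ∈ (W e)ᶜ, X n = true} := by
    ext X
    simp only [hSdef, Set.mem_compl_iff, Set.mem_setOf_eq, not_exists, not_and]
    constructor
    · intro h n hn
      have := h n hn
      simpa using this
    · intro h n hn hf
      rw [h n hn] at hf
      exact Bool.true_eq_false_eq_False hf
  have hμcompl : μ Sᶜ = 0 := by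
    have hle : ∀ k : ℕ, μ Sᶜ ≤ (1/2 : ENNReal)^k := by
      intro k
      rw [hcompl]
      exact aux_measure_allTrue_le μ hμ hinf k
    have htend : Filter.Tendsto (fun k : ℕ => (1/2 : ENNReal)^k) Filter.atTop (nhds 0) :=
      ENNReal.tendsto_pow_atTop_nhds_zero_of_lt_one (by norm_num)
    exact le_antisymm (ge_of_tendsto' htend hle) zero_le
  have huniv : μ Set.univ = 1 := by
    have := hμ []
    rw [show cyl [] = Set.univ from by ext X; simp [cyl]] at this
    simpa using this
  have hμS : μ S = 1 := by
    apply le_antisymm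
    · rw [← huniv]; exact MeasureTheory.measure_mono (Set.subset_univ S)
    · calc (1:ENNReal) = μ Set.univ := huniv.symm
        _ = μ (S ∪ Sᶜ) := by rw [Set.union_compl_self]
        _ ≤ μ S + μ Sᶜ := MeasureTheory.measure_union_le S Sᶜ
        _ = μ S := by rw [hμcompl, add_zero]
  obtain ⟨n, hn, hf⟩ := hY S hclass hμS
  have := hsub hn
  rw [Set.mem_setOf_eq] at this
  rw [this] at hf
  exact Bool.true_eq_false_eq_False hf
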